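/- Let Γ be a finite connected graph with vertex set V, a nonempty subset D ⊆ V of 'boundary' vertices, and let G be a group. Two G-colorings c, c' of Γ have the same holonomy along every edge path with both endpoints in D if and only if they differ by a gauge transformation λ : V → G with λ(v) = e for all v ∈ D. -/
import Mathlib


/-- A graph presented by its set of *oriented* edges: each oriented edge has a source
vertex, and there is an orientation-reversal involution; the target of `e` is the source
of the reversed edge. -/
structure OrientedGraph (V E : Type*) where
  s : E → V
  rev : E → E
  rev_rev : ∀ e, rev (rev e) = e

namespace OrientedGraph

variable {V E : Type*} {G : Type*} [Group G]

/-- The target of an oriented edge. -/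
def t (Γ : OrientedGraph V E) (e : E) : V := Γ.s (Γ.rev e)

/-- A `G`-coloring of the graph: a function on oriented edges inverting under
orientation reversal. -/
def IsColoring (Γ : OrientedGraph V E) (c : E → G) : Prop :=
  ∀ e, c (Γ.rev e) = (c e)⁻¹

/-- The action of a gauge transformation `lam : V → G` on colorings:
`(λ·c)(e) = λ(s(e)) · c(e) · λ(t(e))⁻¹`. -/
def gauge (Γ : OrientedGraph V E) (lam : V → G) (c : E → G) : E → G :=
  fun e => lam (Γ.s e) * c e * (lam (Γ.t e))⁻¹

end OrientedGraph

namespace OrientedGraph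

variable {V E : Type*} {G : Type*} [Group G]

/-- `IsWalk Γ l u v` : the list of oriented edges `l` forms an edge path from `u` to `v`. -/
def IsWalk (Γ : OrientedGraph V E) : List E → V → V → Prop
  | [], u, v => u = v
  | e :: l, u, v => Γ.s e = u ∧ IsWalk Γ l (Γ.t e) v

/-- The holonomy of a coloring along an edge path: the ordered product of the colors. -/
def holonomy (c : E → G) (l : List E) : G := (l.map c).prod

/-- The graph is connected: any two vertices are joined by an edge path. -/
def Connected (Γ : OrientedGraph V E) : Prop := ∀ u v : V, ∃ l, Γ.IsWalk l u v

end OrientedGraph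

namespace OrientedGraph

variable {V E : Type*} {G : Type*} [Group G] (Γ : OrientedGraph V E)

theorem isWalk_append {l1 l2 : List E} {u v w : V} (h1 : Γ.IsWalk l1 u v)
    (h2 : Γ.IsWalk l2 v w) : Γ.IsWalk (l1 ++ l2) u w := by
  induction l1 generalizing u with
  | nil => cases h1; simpa using h2
  | cons e l ih => exact ⟨h1.1, ih h1.2⟩

theorem holonomy_append (c : E → G) (l1 l2 : List E) :
    holonomy c (l1 ++ l2) = holonomy c l1 * holonomy c l2 := by
  simp [holonomy]

theorem holonomy_cons (c : E → G) (e : E) (l : List E) :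
    holonomy c (e :: l) = c e * holonomy c l := by
  simp [holonomy]

theorem isWalk_reverse {l : List E} {u v : V} (h : Γ.IsWalk l u v) :
    Γ.IsWalk (l.reverse.map Γ.rev) v u := by
  induction l generalizing u with
  | nil => cases h; exact rfl
  | cons e l ih =>
    obtain ⟨he, hl⟩ := h
    subst he
    simp only [List.reverse_cons, List.map_append, List.map_cons, List.map_nil]
    refine Γ.isWalk_append (ih hl) ⟨rfl, ?_⟩
    show Γ.IsWalk [] (Γ.t (Γ.rev e)) (Γ.s e)
    show Γ.t (Γ.rev e) = Γ.s e
    simp [OrientedGraph.t, Γ.rev_rev]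

theorem holonomy_reverse {c : E → G} (hc : Γ.IsColoring c) (l : List E) :
    holonomy c (l.reverse.map Γ.rev) = (holonomy c l)⁻¹ := by
  induction l with
  | nil => simp [holonomy]
  | cons e l ih =>
    rw [List.reverse_cons, List.map_append]
    simp only [List.map_cons, List.map_nil]
    rw [holonomy_append, ih, holonomy_cons c e l]
    have h1 : holonomy c [Γ.rev e] = (c e)⁻¹ := by simp [holonomy, hc e]
    rw [h1, mul_inv_rev]

theorem holonomy_gauge (lam : V → G) (c : E → G) {l : List E} {u v : V}
    (h : Γ.IsWalk l u v) :
    holonomy (Γ.gauge lam c) l = lam u * holonomy c l * (lam v)⁻¹ := by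
  induction l generalizing u with
  | nil => cases h; simp [holonomy]
  | cons e l ih =>
    obtain ⟨he, hl⟩ := h
    subst he
    rw [holonomy_cons, holonomy_cons, ih hl]
    simp only [gauge]
    group

end OrientedGraph

open OrientedGraph

/-- Two `G`-colorings of a finite connected graph have the same holonomy along every edge
path with both endpoints in the boundary set `D` if and only if they differ by a gauge
transformation which is trivial on `D`. -/
theorem same_holonomy_iff_gauge {V E G : Type*} [Fintype V] [Fintype E] [Group G]
    (Γ : OrientedGraph V E) (D : Set V) (hD : D.Nonempty) (hconn : Γ.Connected)
    (c c' : E → G) (hc : Γ.IsColoring c) (hc' : Γ.IsColoring c') :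
    (∀ (l : List E) (u v : V), u ∈ D → v ∈ D → Γ.IsWalk l u v →
        holonomy c l = holonomy c' l) ↔
    (∃ lam : V → G, (∀ v ∈ D, lam v = 1) ∧ Γ.gauge lam c = c') := by
  constructor
  · intro h
    obtain ⟨v0, hv0⟩ := hD
    choose p hp using fun v => hconn v0 v
    -- key: for any walk l from v0 to x, the "ratio" only depends on x
    have key : ∀ (l : List E) (x : V), Γ.IsWalk l v0 x →
        (holonomy c' l)⁻¹ * holonomy c l
          = (holonomy c' (p x))⁻¹ * holonomy c (p x) := by
      intro l x hl
      have hw : Γ.IsWalk (l ++ (p x).reverse.map Γ.rev) v0 v0 :=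
        Γ.isWalk_append hl (Γ.isWalk_reverse (hp x))
      have := h _ _ _ hv0 hv0 hw
      rw [holonomy_append, holonomy_append, Γ.holonomy_reverse hc,
        Γ.holonomy_reverse hc'] at this
      have h2 : holonomy c l * (holonomy c (p x))⁻¹
          = holonomy c' l * (holonomy c' (p x))⁻¹ := this
      calc (holonomy c' l)⁻¹ * holonomy c l
          = (holonomy c' l)⁻¹ * (holonomy c l * (holonomy c (p x))⁻¹)
              * holonomy c (p x) := by group
        _ = (holonomy c' l)⁻¹ * (holonomy c' l * (holonomy c' (p x))⁻¹)
              * holonomy c (p x) := by rw [h2]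
        _ = (holonomy c' (p x))⁻¹ * holonomy c (p x) := by group
    refine ⟨fun v => (holonomy c' (p v))⁻¹ * holonomy c (p v), ?_, ?_⟩
    · intro v hv
      have heq := h (p v) v0 v hv0 hv (hp v)
      show (holonomy c' (p v))⁻¹ * holonomy c (p v) = 1
      rw [heq]
      group
    · funext e
      have hb := key (p (Γ.s e) ++ [e]) (Γ.t e)
        (Γ.isWalk_append (hp (Γ.s e)) ⟨rfl, rfl⟩)
      rw [holonomy_append, holonomy_append] at hb
      have hone : holonomy c [e] = c e := by simp [holonomy]
      have hone' : holonomy c' [e] = c' e := by simp [holonomy]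
      rw [hone, hone'] at hb
      show (holonomy c' (p (Γ.s e)))⁻¹ * holonomy c (p (Γ.s e)) * c e
          * ((holonomy c' (p (Γ.t e)))⁻¹ * holonomy c (p (Γ.t e)))⁻¹ = c' e
      rw [← hb]
      group
  · rintro ⟨lam, hlam, rfl⟩
    intro l u v hu hv hl
    rw [Γ.holonomy_gauge lam c hl, hlam u hu, hlam v hv]
    group
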